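/- Let f : ℝⁿ → ℝⁿ be continuously differentiable with λ∞(Df(z)) ≤ Λ for all z ∈ ℝⁿ, let g_i : ℝⁿ → ℝⁿ (i = 1,…,m) be continuous with ‖g_i(z)‖ ≤ K_i for all z, and let v_i : [t_k, t_k+h] → ℝ be measurable with |v_i(t)| ≤ V_i. Let x be a solution of ẋ(t) = f(x(t)) + Σ_{i=1}^m g_i(x(t)) v_i(t) on [t_k, t_k+h], and let y be a solution of ẏ(t) = f(y(t)) on [t_k, t_k+h] with y(t_k) = x(t_k). Then ‖x(t_k+h) − y(t_k+h)‖ ≤ h·K'·φ(Λh), where K' = Σ_{i=1}^m V_i K_i. -/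

import Mathlib

open MeasureTheory Set

/-- `φ(x) = (eˣ − 1)/x` for `x ≠ 0`, `φ(0) = 1`. -/
noncomputable def phi (x : ℝ) : ℝ := if x = 0 then 1 else (Real.exp x - 1) / x

/-- The logarithmic norm `λ∞(A) = max_k ( a_{kk} + Σ_{i≠k} |a_{ki}| )` of a linear map on
`ℝⁿ` with the supremum norm, expressed via its matrix entries `a_{ki} = (A eᵢ)_k`. -/
noncomputable def logNormInf {n : ℕ} (A : (Fin n → ℝ) →L[ℝ] (Fin n → ℝ)) : ℝ :=
  ⨆ k, (A (Pi.single k 1) k + ∑ i ∈ Finset.univ.erase k, |A (Pi.single i 1) k|)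

lemma phi_nonneg (x : ℝ) : 0 ≤ phi x := by
  unfold phi
  split_ifs with hx
  · norm_num
  · rcases lt_or_gt_of_ne hx with hlt | hgt
    · rw [div_nonneg_iff]
      right
      constructor
      · simp [Real.exp_le_one_iff, hlt.le]
      · exact hlt.le
    · apply div_nonneg _ hgt.le
      simp [Real.one_le_exp_iff, hgt.le]

lemma gronwallBound_eq_phi (Λ ε h : ℝ) (hh : 0 < h) :
    gronwallBound 0 Λ ε h = h * ε * phi (Λ * h) := by
  unfold phi
  by_cases hΛ : Λ = 0
  · simp [hΛ, gronwallBound_K0]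
    ring
  · have : Λ * h ≠ 0 := mul_ne_zero hΛ hh.ne'
    rw [gronwallBound_of_K_ne_0 hΛ]
    rw [if_neg this]
    field_simp
    ring

lemma clm_apply_eq_sum {n : ℕ} (B : (Fin n → ℝ) →L[ℝ] (Fin n → ℝ)) (q : Fin n → ℝ) (k : Fin n) :
    B q k = ∑ i, q i * B (Pi.single i 1) k := by
  conv_lhs => rw [← Finset.univ_sum_single q]
  rw [map_sum, Finset.sum_apply]
  refine Finset.sum_congr rfl fun i _ => ?_
  have h1 : Pi.single i (q i) = q i • (Pi.single i (1:ℝ) : Fin n → ℝ) := by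
    rw [← Pi.single_smul, smul_eq_mul, mul_one]
  rw [h1, _root_.map_smul]
  simp [mul_comm]

lemma key_bound {n : ℕ} (B : (Fin n → ℝ) →L[ℝ] (Fin n → ℝ)) (k : Fin n)
    (Λ M d c c2 σ : ℝ) (q : Fin n → ℝ)
    (hlog : B (Pi.single k 1) k + ∑ i ∈ Finset.univ.erase k, |B (Pi.single i 1) k| ≤ Λ)
    (hM : ∀ i, |B (Pi.single i 1) k| ≤ M)
    (hσ : |σ| = 1)
    (hq1 : ‖q‖ ≤ d + c)
    (hq2 : d - c2 ≤ σ * q k)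
    (hd : 0 ≤ d) (hc : 0 ≤ c) (hc2 : 0 ≤ c2) :
    σ * B q k ≤ Λ * d + M * (c + c2) + (n * M) * c := by
  have habs : ∀ i, |q i| ≤ d + c := fun i =>
    (Real.norm_eq_abs (q i) ▸ norm_le_pi_norm q i).trans hq1
  have hexp : σ * B q k =
      B (Pi.single k 1) k * (σ * q k) +
        ∑ i ∈ Finset.univ.erase k, B (Pi.single i 1) k * (σ * q i) := by
    rw [clm_apply_eq_sum, Finset.mul_sum,
      ← Finset.add_sum_erase _ (fun i => σ * (q i * B (Pi.single i 1) k)) (Finset.mem_univ k)]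
    congr 1
    · ring
    · exact Finset.sum_congr rfl fun i _ => by ring
  rw [hexp]
  have hqk : |σ * q k - d| ≤ c + c2 := by
    have h1 : σ * q k ≤ d + c := by
      calc σ * q k ≤ |σ * q k| := le_abs_self _
      _ = |q k| := by rw [abs_mul, hσ, one_mul]
      _ ≤ d + c := habs k
    rw [abs_le]; constructor <;> linarith
  have t1 : B (Pi.single k 1) k * (σ * q k) ≤ B (Pi.single k 1) k * d + M * (c + c2) := by
    have habs2 : |B (Pi.single k 1) k * (σ * q k - d)| ≤ M * (c + c2) := by
      rw [abs_mul]
      exact mul_le_mul (hM k) hqk (abs_nonneg _) ((abs_nonneg _).trans (hM k))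
    have hid : B (Pi.single k 1) k * (σ * q k)
        = B (Pi.single k 1) k * d + B (Pi.single k 1) k * (σ * q k - d) := by ring
    linarith [le_abs_self (B (Pi.single k 1) k * (σ * q k - d))]
  have t2 : ∑ i ∈ Finset.univ.erase k, B (Pi.single i 1) k * (σ * q i)
      ≤ (∑ i ∈ Finset.univ.erase k, |B (Pi.single i 1) k|) * d + (n * M) * c := by
    have hM0 : 0 ≤ M := (abs_nonneg _).trans (hM k)
    have step : ∀ i ∈ Finset.univ.erase k,
        B (Pi.single i 1) k * (σ * q i) ≤ |B (Pi.single i 1) k| * (d + c) := by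
      intro i _
      calc B (Pi.single i 1) k * (σ * q i) ≤ |B (Pi.single i 1) k * (σ * q i)| := le_abs_self _
      _ = |B (Pi.single i 1) k| * |q i| := by rw [abs_mul, abs_mul, hσ, one_mul]
      _ ≤ |B (Pi.single i 1) k| * (d + c) := by
          exact mul_le_mul_of_nonneg_left (habs i) (abs_nonneg _)
    calc ∑ i ∈ Finset.univ.erase k, B (Pi.single i 1) k * (σ * q i)
        ≤ ∑ i ∈ Finset.univ.erase k, |B (Pi.single i 1) k| * (d + c) :=
          Finset.sum_le_sum step
      _ = (∑ i ∈ Finset.univ.erase k, |B (Pi.single i 1) k|) * d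
          + (∑ i ∈ Finset.univ.erase k, |B (Pi.single i 1) k|) * c := by
          rw [← Finset.sum_mul]; ring
      _ ≤ (∑ i ∈ Finset.univ.erase k, |B (Pi.single i 1) k|) * d + (n * M) * c := by
          have hcard : (∑ i ∈ Finset.univ.erase k, |B (Pi.single i 1) k|) ≤ n * M := by
            calc (∑ i ∈ Finset.univ.erase k, |B (Pi.single i 1) k|)
                ≤ ∑ _i ∈ Finset.univ.erase k, M := Finset.sum_le_sum fun i _ => hM i
              _ = (Finset.univ.erase k).card * M := by rw [Finset.sum_const, nsmul_eq_mul]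
              _ ≤ n * M := by
                  apply mul_le_mul_of_nonneg_right _ hM0
                  have := Finset.card_erase_le (s := (Finset.univ : Finset (Fin n))) (a := k)
                  exact_mod_cast this.trans (by simp)
          exact add_le_add le_rfl (mul_le_mul_of_nonneg_right hcard hc)
  have hsum0 : 0 ≤ ∑ i ∈ Finset.univ.erase k, |B (Pi.single i 1) k| :=
    Finset.sum_nonneg fun i _ => abs_nonneg _
  nlinarith [mul_le_mul_of_nonneg_right hlog hd]

lemma segment_deriv_cont {n : ℕ} {f : (Fin n → ℝ) → (Fin n → ℝ)} (hf : ContDiff ℝ 1 f)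
    (p q : Fin n → ℝ) (k : Fin n) :
    Continuous fun θ : ℝ => (fderiv ℝ f (p + θ • (q - p))) (q - p) k := by
  have hc : Continuous fun θ : ℝ => p + θ • (q - p) := by continuity
  have hdf : Continuous (fderiv ℝ f) := hf.continuous_fderiv one_ne_zero
  have : Continuous fun θ : ℝ => (fderiv ℝ f (p + θ • (q - p))) (q - p) :=
    (hdf.comp hc).clm_apply continuous_const
  exact (continuous_apply k).comp this

lemma mean_value_component {n : ℕ} {f : (Fin n → ℝ) → (Fin n → ℝ)} (hf : ContDiff ℝ 1 f)
    (p q : Fin n → ℝ) (k : Fin n) :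
    f q k - f p k = ∫ θ in (0:ℝ)..1, (fderiv ℝ f (p + θ • (q - p))) (q - p) k := by
  have hderiv : ∀ θ ∈ uIcc (0:ℝ) 1,
      HasDerivAt (fun θ : ℝ => f (p + θ • (q - p)) k)
        ((fderiv ℝ f (p + θ • (q - p))) (q - p) k) θ := by
    intro θ _
    have hc : HasDerivAt (fun θ : ℝ => p + θ • (q - p)) (q - p) θ := by
      simpa using ((hasDerivAt_id θ).smul_const (q - p)).const_add p
    have hd : HasFDerivAt f (fderiv ℝ f (p + θ • (q - p))) (p + θ • (q - p)) :=
      (hf.differentiable one_ne_zero).differentiableAt.hasFDerivAt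
    have := hd.comp_hasDerivAt θ hc
    exact (hasDerivAt_pi.1 this) k
  have hint : IntervalIntegrable
      (fun θ : ℝ => (fderiv ℝ f (p + θ • (q - p))) (q - p) k) volume 0 1 :=
    (segment_deriv_cont hf p q k).intervalIntegrable 0 1
  have := intervalIntegral.integral_eq_sub_of_hasDerivAt hderiv hint
  rw [this]
  simp

set_option maxHeartbeats 2000000

/-- If `λ∞(Df(z)) ≤ Λ`, `‖gᵢ(z)‖ ≤ Kᵢ`, `|vᵢ(t)| ≤ Vᵢ`, `x` solves
`ẋ = f(x) + Σᵢ gᵢ(x)vᵢ(t)` and `y` solves `ẏ = f(y)` on `[t_k, t_k+h]` with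
`y(t_k) = x(t_k)`, then `‖x(t_k+h) − y(t_k+h)‖ ≤ h·K'·φ(Λh)` with `K' = Σᵢ VᵢKᵢ`. -/
theorem local_error_first_order {n m : ℕ}
    (f : (Fin n → ℝ) → (Fin n → ℝ)) (g : Fin m → (Fin n → ℝ) → (Fin n → ℝ))
    (v : Fin m → ℝ → ℝ) (K : Fin m → ℝ) (V : Fin m → ℝ) (Λ : ℝ) (tk h : ℝ)
    (x y : ℝ → Fin n → ℝ)
    (hh : 0 < h)
    (hf : ContDiff ℝ 1 f)
    (hΛ : ∀ z, logNormInf (fderiv ℝ f z) ≤ Λ)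
    (hg : ∀ i, Continuous (g i))
    (hK : ∀ i z, ‖g i z‖ ≤ K i)
    (hv : ∀ i, Measurable (v i))
    (hV : ∀ i, ∀ t ∈ Icc tk (tk + h), |v i t| ≤ V i)
    (hxc : ContinuousOn x (Icc tk (tk + h)))
    (hx : ∀ t ∈ Icc tk (tk + h),
      x t = x tk + ∫ s in tk..t, (f (x s) + ∑ i, v i s • g i (x s)))
    (hyc : ContinuousOn y (Icc tk (tk + h)))
    (hy : ∀ t ∈ Icc tk (tk + h), y t = y tk + ∫ s in tk..t, f (y s))
    (hinit : y tk = x tk) :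
    ‖x (tk + h) - y (tk + h)‖ ≤ h * (∑ i, V i * K i) * phi (Λ * h) := by
  have htk : tk ≤ tk + h := by linarith
  have htkmem : tk ∈ Icc tk (tk + h) := ⟨le_rfl, htk⟩
  have hK0 : ∀ i, 0 ≤ K i := fun i => (norm_nonneg _).trans (hK i 0)
  have hV0 : ∀ i, 0 ≤ V i := fun i => (abs_nonneg _).trans (hV i tk htkmem)
  set K' := ∑ i, V i * K i with hK'def
  have hK'0 : 0 ≤ K' := Finset.sum_nonneg fun i _ => mul_nonneg (hV0 i) (hK0 i)
  rcases Nat.eq_zero_or_pos n with hn | hn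
  · subst hn
    have hz0 : x (tk + h) - y (tk + h) = 0 := Subsingleton.elim _ _
    rw [hz0, norm_zero]
    exact mul_nonneg (mul_nonneg hh.le hK'0) (phi_nonneg _)
  haveI : Nonempty (Fin n) := Fin.pos_iff_nonempty.1 hn
  set z : ℝ → Fin n → ℝ := fun t => x t - y t with hzdef
  set u : ℝ → ℝ := fun t => ‖z t‖ with hudef
  set Fx : ℝ → Fin n → ℝ := fun s => f (x s) + ∑ i, v i s • g i (x s) with hFxdef
  set Fy : ℝ → Fin n → ℝ := fun s => f (y s) with hFydef
  set w : ℝ → Fin n → ℝ := fun s => ∑ i, v i s • g i (x s) with hwdef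
  have hzc : ContinuousOn z (Icc tk (tk + h)) := hxc.sub hyc
  have huc : ContinuousOn u (Icc tk (tk + h)) := hzc.norm
  -- bound on the perturbation
  have hwle : ∀ s ∈ Icc tk (tk + h), ‖w s‖ ≤ K' := by
    intro s hs
    calc ‖∑ i, v i s • g i (x s)‖ ≤ ∑ i, ‖v i s • g i (x s)‖ := norm_sum_le _ _
    _ ≤ ∑ i, V i * K i := by
        refine Finset.sum_le_sum fun i _ => ?_
        rw [norm_smul, Real.norm_eq_abs]
        exact mul_le_mul (hV i s hs) (hK i (x s)) (norm_nonneg _) (hV0 i)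
  -- measurability
  have measI : MeasurableSet (Icc tk (tk + h)) := measurableSet_Icc
  have hxm : AEStronglyMeasurable x (volume.restrict (Icc tk (tk + h))) :=
    hxc.aestronglyMeasurable measI
  have hym : AEStronglyMeasurable y (volume.restrict (Icc tk (tk + h))) :=
    hyc.aestronglyMeasurable measI
  have hFxm : AEStronglyMeasurable Fx (volume.restrict (Icc tk (tk + h))) := by
    refine AEStronglyMeasurable.add ?_ ?_
    · exact hf.continuous.comp_aestronglyMeasurable hxm
    · refine Finset.aestronglyMeasurable_fun_sum _ fun i _ => ?_
      exact ((hv i).aestronglyMeasurable).smul ((hg i).comp_aestronglyMeasurable hxm)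
  have hFym : AEStronglyMeasurable Fy (volume.restrict (Icc tk (tk + h))) :=
    hf.continuous.comp_aestronglyMeasurable hym
  -- bounds
  obtain ⟨Cx, hCx⟩ := isCompact_Icc.exists_bound_of_continuousOn
    (hf.continuous.comp_continuousOn hxc)
  obtain ⟨Cy, hCy⟩ := isCompact_Icc.exists_bound_of_continuousOn
    (hf.continuous.comp_continuousOn hyc)
  have hCx0 : 0 ≤ Cx := (norm_nonneg _).trans (hCx tk htkmem)
  have hCy0 : 0 ≤ Cy := (norm_nonneg _).trans (hCy tk htkmem)
  have hFxle : ∀ s ∈ Icc tk (tk + h), ‖Fx s‖ ≤ Cx + K' := fun s hs =>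
    (norm_add_le _ _).trans (add_le_add (hCx s hs) (hwle s hs))
  have hFxint : IntegrableOn Fx (Icc tk (tk + h)) := by
    refine Integrable.mono' (g := fun _ => Cx + K')
      (integrableOn_const measure_Icc_lt_top.ne) hFxm ?_
    exact (ae_restrict_iff' measI).2 (Filter.Eventually.of_forall hFxle)
  have hFyint : IntegrableOn Fy (Icc tk (tk + h)) := by
    refine Integrable.mono' (g := fun _ => Cy)
      (integrableOn_const measure_Icc_lt_top.ne) hFym ?_
    exact (ae_restrict_iff' measI).2 (Filter.Eventually.of_forall hCy)
  have hFxii : ∀ t ∈ Icc tk (tk + h), ∀ s ∈ Icc tk (tk + h),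
      IntervalIntegrable Fx volume t s := fun t ht s hs =>
    (hFxint.mono_set (uIcc_subset_Icc ht hs)).intervalIntegrable
  have hFyii : ∀ t ∈ Icc tk (tk + h), ∀ s ∈ Icc tk (tk + h),
      IntervalIntegrable Fy volume t s := fun t ht s hs =>
    (hFyint.mono_set (uIcc_subset_Icc ht hs)).intervalIntegrable
  -- integral identities
  have hxeq : ∀ t ∈ Icc tk (tk + h), ∀ s ∈ Icc tk (tk + h),
      x s - x t = ∫ τ in t..s, Fx τ := by
    intro t ht s hs
    rw [hx s hs, hx t ht, add_sub_add_left_eq_sub]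
    exact intervalIntegral.integral_interval_sub_left (hFxii tk htkmem s hs) (hFxii tk htkmem t ht)
  have hyeq : ∀ t ∈ Icc tk (tk + h), ∀ s ∈ Icc tk (tk + h),
      y s - y t = ∫ τ in t..s, Fy τ := by
    intro t ht s hs
    rw [hy s hs, hy t ht, add_sub_add_left_eq_sub]
    exact intervalIntegral.integral_interval_sub_left (hFyii tk htkmem s hs) (hFyii tk htkmem t ht)
  have hzeq : ∀ t ∈ Icc tk (tk + h), ∀ s ∈ Icc tk (tk + h),
      z s - z t = ∫ τ in t..s, (Fx τ - Fy τ) := by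
    intro t ht s hs
    calc z s - z t = (x s - x t) - (y s - y t) := by simp only [hzdef]; abel
    _ = (∫ τ in t..s, Fx τ) - ∫ τ in t..s, Fy τ := by rw [hxeq t ht s hs, hyeq t ht s hs]
    _ = ∫ τ in t..s, (Fx τ - Fy τ) :=
        (intervalIntegral.integral_sub (hFxii t ht s hs) (hFyii t ht s hs)).symm
  -- Lipschitz bound for z
  set C := Cx + K' + Cy with hCdef
  have hC0 : 0 ≤ C := by positivity
  have hFsuble : ∀ τ ∈ Icc tk (tk + h), ‖Fx τ - Fy τ‖ ≤ C := fun τ hτ =>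
    (norm_sub_le _ _).trans (add_le_add (hFxle τ hτ) (hCy τ hτ))
  have hzlip : ∀ t ∈ Icc tk (tk + h), ∀ s ∈ Icc tk (tk + h), t ≤ s →
      ‖z s - z t‖ ≤ C * (s - t) := by
    intro t ht s hs hts
    rw [hzeq t ht s hs]
    have hb : ∀ τ ∈ Set.uIoc t s, ‖Fx τ - Fy τ‖ ≤ C := by
      intro τ hτ
      rw [Set.uIoc_of_le hts] at hτ
      exact hFsuble τ ⟨ht.1.trans hτ.1.le, hτ.2.trans hs.2⟩
    have := intervalIntegral.norm_integral_le_of_norm_le_const hb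
    rwa [abs_of_nonneg (by linarith)] at this
  -- radius bound for segments
  obtain ⟨r1, hr1⟩ := isCompact_Icc.exists_bound_of_continuousOn hxc
  obtain ⟨r2, hr2⟩ := isCompact_Icc.exists_bound_of_continuousOn hyc
  set r := max r1 r2 with hrdef
  have hr0 : 0 ≤ r := (norm_nonneg (x tk)).trans ((hr1 tk htkmem).trans (le_max_left _ _))
  have hseg : ∀ τ ∈ Icc tk (tk + h), ∀ θ ∈ Icc (0:ℝ) 1,
      y τ + θ • (x τ - y τ) ∈ Metric.closedBall (0 : Fin n → ℝ) r := by
    intro τ hτ θ hθ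
    rw [Metric.mem_closedBall, dist_zero_right]
    have hid : y τ + θ • (x τ - y τ) = (1 - θ) • y τ + θ • x τ := by module
    rw [hid]
    calc ‖(1 - θ) • y τ + θ • x τ‖ ≤ ‖(1 - θ) • y τ‖ + ‖θ • x τ‖ := norm_add_le _ _
    _ = (1 - θ) * ‖y τ‖ + θ * ‖x τ‖ := by
        rw [norm_smul, norm_smul, Real.norm_eq_abs, Real.norm_eq_abs,
          abs_of_nonneg (by linarith [hθ.2]), abs_of_nonneg hθ.1]
    _ ≤ (1 - θ) * r + θ * r := by
        have h1 : ‖y τ‖ ≤ r := (hr2 τ hτ).trans (le_max_right _ _)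
        have h2 : ‖x τ‖ ≤ r := (hr1 τ hτ).trans (le_max_left _ _)
        have := hθ.1
        have := hθ.2
        nlinarith
    _ = r := by ring
  -- bound on the derivative on the ball
  obtain ⟨M, hM⟩ := (isCompact_closedBall (0 : Fin n → ℝ) r).exists_bound_of_continuousOn
    (hf.continuous_fderiv one_ne_zero).continuousOn
  have hM0 : 0 ≤ M := (norm_nonneg _).trans (hM 0 (Metric.mem_closedBall_self hr0))
  have hMentry : ∀ p ∈ Metric.closedBall (0 : Fin n → ℝ) r, ∀ i k' : Fin n,
      |(fderiv ℝ f p) (Pi.single i 1) k'| ≤ M := by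
    intro p hp i k'
    calc |(fderiv ℝ f p) (Pi.single i 1) k'|
        ≤ ‖(fderiv ℝ f p) (Pi.single i 1)‖ := by
          rw [← Real.norm_eq_abs]; exact norm_le_pi_norm _ _
      _ ≤ ‖fderiv ℝ f p‖ * ‖(Pi.single i 1 : Fin n → ℝ)‖ := (fderiv ℝ f p).le_opNorm _
      _ ≤ M * 1 := by
          rw [Pi.norm_single, norm_one]
          exact mul_le_mul_of_nonneg_right (hM p hp) zero_le_one
      _ = M := mul_one M
  have hlogk : ∀ p : Fin n → ℝ, ∀ k : Fin n,
      (fderiv ℝ f p) (Pi.single k 1) k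
        + ∑ i ∈ Finset.univ.erase k, |(fderiv ℝ f p) (Pi.single i 1) k| ≤ Λ := by
    intro p k
    have hlp := hΛ p
    rw [logNormInf] at hlp
    exact le_trans (le_ciSup (f := fun k => (fderiv ℝ f p) (Pi.single k 1) k
      + ∑ i ∈ Finset.univ.erase k, |(fderiv ℝ f p) (Pi.single i 1) k|)
      (Set.Finite.bddAbove (Set.finite_range _)) k) hlp
  set C1 := (n + 3 : ℝ) * (M * C) with hC1def
  have hC10 : 0 ≤ C1 := by positivity
  -- the key one-sided slope estimate
  have keyD : ∀ t ∈ Ico tk (tk + h), ∀ s ∈ Ioc t (tk + h),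
      u s - u t ≤ (Λ * u t + K') * (s - t) + C1 * (s - t) ^ 2 := by
    intro t ht s hs
    have htI : t ∈ Icc tk (tk + h) := ⟨ht.1, ht.2.le⟩
    have hsI : s ∈ Icc tk (tk + h) := ⟨ht.1.trans hs.1.le, hs.2⟩
    have hts : t ≤ s := hs.1.le
    obtain ⟨k, -, hk⟩ := Finset.exists_max_image Finset.univ (fun i => |z s i|) ⟨Classical.arbitrary _, Finset.mem_univ _⟩
    have husk : u s = |z s k| := by
      refine le_antisymm ?_ ?_
      · exact (pi_norm_le_iff_of_nonneg (abs_nonneg _)).2 fun i =>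
          (Real.norm_eq_abs (z s i)) ▸ hk i (Finset.mem_univ i)
      · rw [← Real.norm_eq_abs]; exact norm_le_pi_norm _ _
    set σ := if 0 ≤ z s k then (1:ℝ) else -1 with hσdef
    have hσ1 : |σ| = 1 := by
      rw [hσdef]; split_ifs <;> simp
    have hσzs : σ * z s k = |z s k| := by
      rw [hσdef]; split_ifs with hsgn
      · rw [abs_of_nonneg hsgn, one_mul]
      · rw [abs_of_neg (lt_of_not_ge hsgn)]; ring
    set L : (Fin n → ℝ) →L[ℝ] ℝ :=
      σ • (ContinuousLinearMap.proj k : (Fin n → ℝ) →L[ℝ] ℝ) with hLdef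
    have hLapp : ∀ q : Fin n → ℝ, L q = σ * q k := fun q => rfl
    have hFsubii : IntervalIntegrable (fun τ => Fx τ - Fy τ) volume t s :=
      (hFxii t htI s hsI).sub (hFyii t htI s hsI)
    have hGii : IntervalIntegrable (fun τ => L (Fx τ - Fy τ)) volume t s :=
      ⟨L.integrable_comp hFsubii.1, L.integrable_comp hFsubii.2⟩
    have hLint : L (z s - z t) = ∫ τ in t..s, L (Fx τ - Fy τ) := by
      rw [hzeq t htI s hsI, L.intervalIntegral_comp_comm hFsubii]
    -- pointwise bound on the integrand
    have hbound : ∀ τ ∈ Icc t s, L (Fx τ - Fy τ) ≤ (Λ * u t + K') + C1 * (s - t) := by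
      intro τ hτ
      have hτI : τ ∈ Icc tk (tk + h) := ⟨htI.1.trans hτ.1, hτ.2.trans hsI.2⟩
      have hLsplit : L (Fx τ - Fy τ) = σ * (f (x τ) k - f (y τ) k) + σ * w τ k := by
        rw [hLapp]
        simp only [hFxdef, hFydef, hwdef, Pi.sub_apply, Pi.add_apply, Finset.sum_apply]
        ring
      have h2 : σ * w τ k ≤ K' := by
        calc σ * w τ k ≤ |σ * w τ k| := le_abs_self _
        _ = |w τ k| := by rw [abs_mul, hσ1, one_mul]
        _ ≤ ‖w τ‖ := by rw [← Real.norm_eq_abs]; exact norm_le_pi_norm _ _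
        _ ≤ K' := hwle τ hτI
      have hq1 : ‖z τ‖ ≤ u t + C * (s - t) := by
        have e1 : ‖z τ‖ ≤ ‖z t‖ + ‖z τ - z t‖ := by
          calc ‖z τ‖ = ‖z t + (z τ - z t)‖ := by rw [show z t + (z τ - z t) = z τ by abel]
          _ ≤ ‖z t‖ + ‖z τ - z t‖ := norm_add_le _ _
        have e2 : ‖z τ - z t‖ ≤ C * (τ - t) := hzlip t htI τ hτI hτ.1
        have e3 : C * (τ - t) ≤ C * (s - t) := by
          apply mul_le_mul_of_nonneg_left _ hC0; linarith [hτ.2]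
        simp only [hudef]; linarith
      have hq2 : u t - 2 * C * (s - t) ≤ σ * z τ k := by
        have e1 : |z s k - z τ k| ≤ ‖z s - z τ‖ := by
          rw [← Real.norm_eq_abs]
          exact (norm_le_pi_norm (z s - z τ) k)
        have e2 : ‖z s - z τ‖ ≤ C * (s - τ) := hzlip τ hτI s hsI hτ.2
        have e3 : ‖z t‖ - ‖z s - z t‖ ≤ ‖z s‖ := by
          have := norm_sub_norm_le (z s) (z t)
          have h4 : ‖z t - z s‖ = ‖z s - z t‖ := norm_sub_rev _ _
          linarith [abs_le.1 (abs_norm_sub_norm_le (z s) (z t))]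
        have e4 : ‖z s - z t‖ ≤ C * (s - t) := hzlip t htI s hsI hts
        have e5 : σ * z τ k = σ * z s k - σ * (z s k - z τ k) := by ring
        have e6 : σ * (z s k - z τ k) ≤ |z s k - z τ k| := by
          calc σ * (z s k - z τ k) ≤ |σ * (z s k - z τ k)| := le_abs_self _
          _ = |z s k - z τ k| := by rw [abs_mul, hσ1, one_mul]
        have e7 : ‖z s‖ = σ * z s k := by rw [hσzs, ← husk]
        have e8 : C * (s - τ) ≤ C * (s - t) := by
          apply mul_le_mul_of_nonneg_left _ hC0; linarith [hτ.1]
        simp only [hudef]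
        linarith
      have h1 : σ * (f (x τ) k - f (y τ) k) ≤ Λ * u t + C1 * (s - t) := by
        rw [mean_value_component hf (y τ) (x τ) k, ← intervalIntegral.integral_const_mul]
        have hcont := segment_deriv_cont hf (y τ) (x τ) k
        have hib : IntervalIntegrable
            (fun θ => σ * (fderiv ℝ f (y τ + θ • (x τ - y τ))) (x τ - y τ) k) volume 0 1 :=
          (continuous_const.mul hcont).intervalIntegrable 0 1
        calc (∫ θ in (0:ℝ)..1, σ * (fderiv ℝ f (y τ + θ • (x τ - y τ))) (x τ - y τ) k)
            ≤ ∫ _θ in (0:ℝ)..1, (Λ * u t + C1 * (s - t)) := by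
              refine intervalIntegral.integral_mono_on zero_le_one hib
                intervalIntegrable_const ?_
              intro θ hθ
              have hball := hseg τ hτI θ hθ
              have hkb := key_bound (fderiv ℝ f (y τ + θ • (x τ - y τ))) k Λ M (u t)
                (C * (s - t)) (2 * C * (s - t)) σ (z τ)
                (hlogk _ k) (fun i => hMentry _ hball i k) hσ1 hq1 hq2
                (norm_nonneg _) (by nlinarith [sub_nonneg.2 hts])
                (by nlinarith [sub_nonneg.2 hts])
              have hzτ : x τ - y τ = z τ := rfl
              rw [hzτ]
              refine hkb.trans (le_of_eq ?_)
              rw [hC1def]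
              ring
          _ = Λ * u t + C1 * (s - t) := by simp
      linarith [hLsplit, h1, h2]
    -- integrate the bound
    have hintle : (∫ τ in t..s, L (Fx τ - Fy τ)) ≤ ((Λ * u t + K') + C1 * (s - t)) * (s - t) := by
      have hmono := intervalIntegral.integral_mono_on hts hGii intervalIntegrable_const hbound
      rw [intervalIntegral.integral_const, smul_eq_mul] at hmono
      linarith [hmono]
    have hσzt : σ * z t k ≤ u t := by
      calc σ * z t k ≤ |σ * z t k| := le_abs_self _
      _ = |z t k| := by rw [abs_mul, hσ1, one_mul]
      _ ≤ ‖z t‖ := by rw [← Real.norm_eq_abs]; exact norm_le_pi_norm _ _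
    have hLz : L (z s - z t) = σ * z s k - σ * z t k := by
      rw [hLapp]; simp [Pi.sub_apply]; ring
    have husk2 : u s = σ * z s k := by rw [husk, hσzs]
    have hring : ((Λ * u t + K') + C1 * (s - t)) * (s - t)
        = (Λ * u t + K') * (s - t) + C1 * (s - t) ^ 2 := by ring
    linarith [hLint, hintle]
  -- Grönwall
  have grw : ∀ t ∈ Icc tk (tk + h), u t ≤ gronwallBound 0 Λ K' (t - tk) := by
    refine le_gronwallBound_of_liminf_deriv_right_le (f' := fun t => Λ * u t + K') huc
      ?_ ?_ (fun t _ => le_rfl)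
    · intro t ht r hr
      have hr' : Λ * u t + K' < r := hr
      set ε0 := (r - (Λ * u t + K')) / (C1 + 1) with hε0def
      have hC1p : (0:ℝ) < C1 + 1 := by linarith
      have hε0 : 0 < ε0 := div_pos (by linarith) hC1p
      have hb' : t < min (tk + h) (t + ε0) := lt_min ht.2 (by linarith)
      apply Filter.Eventually.frequently
      filter_upwards [Ioo_mem_nhdsGT_of_mem ⟨le_rfl, hb'⟩] with s hs
      have hs1 : t < s := hs.1
      have hs2 : s ≤ tk + h := (hs.2.trans_le (min_le_left _ _)).le
      have hs3 : s - t < ε0 := by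
        have := hs.2.trans_le (min_le_right _ _); linarith
      have hst : 0 < s - t := by linarith
      have hD := keyD t ht s ⟨hs1, hs2⟩
      have h4 : (s - t)⁻¹ * (u s - u t) ≤ (Λ * u t + K') + C1 * (s - t) := by
        rw [inv_mul_eq_div, div_le_iff₀ hst]
        nlinarith [hD]
      have h5 : C1 * (s - t) < r - (Λ * u t + K') := by
        have e1 : C1 * (s - t) ≤ C1 * ε0 := mul_le_mul_of_nonneg_left hs3.le hC10
        have e2 : C1 * ε0 < (C1 + 1) * ε0 := by nlinarith
        have e3 : (C1 + 1) * ε0 = r - (Λ * u t + K') := by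
          rw [hε0def]; field_simp
        linarith
      linarith
    · have : u tk = 0 := by
        simp only [hudef, hzdef, hinit, sub_self, norm_zero]
      linarith [this.le]
  have grwfin := grw (tk + h) ⟨htk, le_rfl⟩
  have hsub : tk + h - tk = h := by ring
  rw [hsub, gronwallBound_eq_phi Λ K' h hh] at grwfin
  exact grwfin
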